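/- For n ≥ 3, if x < y in 1ₙ^⊥ \ {0} with xₙ ∈ S¹, and 0 ∈ x_j ⊞ x_k ⊞ xₙ for some j < k < n, then 0 ∈ y_j ⊞ y_k ⊞ yₙ. Consequently every chain in {x ∈ 1ₙ^⊥ : xₙ ∈ S¹} is entirely contained in {x ∈ Φⁿ \ {0} : 0 ∈ x_j ⊞ x_k ⊞ xₙ} for some j < k < n. -/

import Mathlib

open Complex Set

noncomputable section

/-- The unit circle `S¹ ⊂ ℂ`. -/
def unitCircle : Set ℂ := Metric.sphere 0 1

/-- The tropical phase hyperfield `Φ = S¹ ∪ {0} ⊂ ℂ`. -/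
def Phi : Set ℂ := unitCircle ∪ {0}

/-- The smallest closed arc of `S¹` joining two non-zero, non-antipodal unit
complex numbers `x` and `y`: the set of phases of nonnegative combinations of `x,y`. -/
def smallArc (x y : ℂ) : Set ℂ :=
  {z : ℂ | ∃ a b : ℝ, 0 ≤ a ∧ 0 ≤ b ∧ 0 < a + b ∧
    z = ((a : ℂ) * x + (b : ℂ) * y) / ((‖(a : ℂ) * x + (b : ℂ) * y‖ : ℝ) : ℂ)}

/-- Hyperaddition in the tropical phase hyperfield. -/
def hadd (x y : ℂ) : Set ℂ :=
  if x = 0 then {y} else if y = 0 then {x} else if y = -x then Phi else smallArc x y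

/-- Iterated hypersum `x₁ ⊞ ⋯ ⊞ xₙ` (unions over intermediate choices). -/
def haddList : List ℂ → Set ℂ
  | [] => {0}
  | a :: l => ⋃ w ∈ haddList l, hadd a w

open scoped Classical

/-- The set of covectors `w^⊥ = {x ∈ Φⁿ : 0 ∈ w₁x₁ ⊞ ⋯ ⊞ wₙxₙ}`. -/
def perp {n : ℕ} (w : Fin n → ℂ) : Set (Fin n → ℂ) :=
  {x | (∀ k, x k ∈ Phi) ∧ (0 : ℂ) ∈ haddList (List.ofFn fun k => w k * x k)}

/-- The number of nonzero entries of `x`, i.e. `|supp(x)|`. -/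
def suppCard {n : ℕ} (x : Fin n → ℂ) : ℕ :=
  (Finset.univ.filter (fun j => x j ≠ 0)).card

/-- The partial order on `Φ`: `0` is below every point of `S¹`. -/
def phiLE (x y : ℂ) : Prop := x = y ∨ x = 0

/-- The componentwise order on `Φⁿ`. -/
def phiLEn {n : ℕ} (x y : Fin n → ℂ) : Prop := ∀ j, phiLE (x j) (y j)
lemma zero_mem_Phi : (0:ℂ) ∈ Phi := Or.inr rfl

lemma mem_Phi_iff {u : ℂ} : u ∈ Phi ↔ ‖u‖ = 1 ∨ u = 0 := by
  simp only [Phi, unitCircle, Set.mem_union, Metric.mem_sphere, Complex.dist_eq, Set.mem_singleton_iff, sub_zero]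


lemma abs_of_mem_Phi {u : ℂ} (h : u ∈ Phi) (h0 : u ≠ 0) : ‖u‖ = 1 :=
  (mem_Phi_iff.1 h).resolve_right h0

lemma mem_Phi_of_abs {u : ℂ} (h : ‖u‖ = 1) : u ∈ Phi := mem_Phi_iff.2 (Or.inl h)

lemma neg_mem_Phi {u : ℂ} (h : u ∈ Phi) : -u ∈ Phi := by
  rcases mem_Phi_iff.1 h with h | h
  · exact mem_Phi_of_abs (by simpa using h)
  · simp [h, zero_mem_Phi]

lemma hadd_zero_left (w : ℂ) : hadd 0 w = {w} := by
  by_cases hw : w = 0 <;> simp [hadd, hw]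

lemma hadd_neg_self {u : ℂ} (hu : u ≠ 0) : hadd u (-u) = Phi := by
  simp [hadd, hu, neg_eq_zero]

lemma mem_smallArc_left {u : ℂ} (hu : ‖u‖ = 1) (w : ℂ) : u ∈ smallArc u w := by
  refine ⟨1, 0, zero_le_one, le_refl _, by norm_num, ?_⟩
  simp [hu]

lemma mem_smallArc_right {w : ℂ} (u : ℂ) (hw : ‖w‖ = 1) : w ∈ smallArc u w := by
  refine ⟨0, 1, le_refl _, zero_le_one, by norm_num, ?_⟩
  simp [hw]

lemma smallArc_combo {u w v : ℂ} (hv : ‖v‖ = 1) (b c : ℝ) (hb : 0 ≤ b) (hc : 0 ≤ c)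
    (h : (b:ℂ) * u + (c:ℂ) * w = v) : v ∈ smallArc u w := by
  have hbc : 0 < b + c := by
    rcases lt_or_eq_of_le hb with hb' | hb'
    · positivity
    · rcases lt_or_eq_of_le hc with hc' | hc'
      · positivity
      · exfalso; rw [← hb', ← hc'] at h; simp at h; rw [← h] at hv; simp at hv
  exact ⟨b, c, hb, hc, hbc, by rw [h, hv]; simp⟩

lemma zero_not_mem_smallArc {u w : ℂ} (hu : ‖u‖ = 1) (hw : ‖w‖ = 1)
    (h : w ≠ -u) : (0:ℂ) ∉ smallArc u w := by
  rintro ⟨a, b, ha, hb, hab, heq⟩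
  have hN : (a:ℂ) * u + (b:ℂ) * w = 0 := by
    by_cases hN0 : (a:ℂ) * u + (b:ℂ) * w = 0
    · exact hN0
    · have : ‖(a:ℂ) * u + (b:ℂ) * w‖ ≠ 0 := by simpa using hN0
      exact absurd heq.symm (by
        simp only [div_eq_zero_iff]
        push_neg
        constructor
        · exact hN0
        · simpa using this)
  -- a*u = -b*w, abs gives a = b
  have h1 : (a:ℂ) * u = -((b:ℂ) * w) := by linear_combination hN
  have h2 : a = b := by
    have := congrArg (fun z : ℂ => ‖z‖) h1
    rw [norm_neg] at this
    simpa [norm_mul, hu, hw, Complex.norm_real, Real.norm_eq_abs, _root_.abs_of_nonneg ha, _root_.abs_of_nonneg hb] using this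
  have hb0 : 0 < b := by rw [h2] at hab; linarith
  apply h
  have hbne : (b:ℂ) ≠ 0 := by exact_mod_cast hb0.ne'
  rw [h2] at h1
  have : (b:ℂ) * w = (b:ℂ) * (-u) := by linear_combination h1
  exact mul_left_cancel₀ hbne this
lemma haddList_cons (a : ℂ) (l : List ℂ) : haddList (a :: l) = ⋃ w ∈ haddList l, hadd a w := rfl

lemma haddList_single (c : ℂ) : haddList [c] = {c} := by
  by_cases hc : c = 0 <;> simp [haddList_cons, haddList, hadd, hc]

lemma haddList_pair (b c : ℂ) : haddList [b, c] = hadd b c := by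
  rw [haddList_cons, haddList_single]; simp

lemma mem_haddList_triple {a b c w : ℂ} :
    w ∈ haddList [a, b, c] ↔ ∃ v ∈ hadd b c, w ∈ hadd a v := by
  rw [haddList_cons, haddList_pair]; simp

lemma right_mem_hadd {u w : ℂ} (hu : u ∈ Phi) (hw : ‖w‖ = 1) : w ∈ hadd u w := by
  have hw0 : w ≠ 0 := by intro h; rw [h] at hw; simp at hw
  by_cases h0 : u = 0
  · simp [hadd, h0]
  · by_cases h1 : w = -u
    · rw [hadd, if_neg h0, if_neg hw0, if_pos h1]
      exact mem_Phi_of_abs hw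
    · rw [hadd, if_neg h0, if_neg hw0, if_neg h1]
      exact mem_smallArc_right u hw

lemma zero_mem_hadd_iff {u w : ℂ} (hu : u ∈ Phi) (hw : w ∈ Phi) :
    (0:ℂ) ∈ hadd u w ↔ (u = 0 ∧ w = 0) ∨ (u ≠ 0 ∧ w = -u) := by
  by_cases h0 : u = 0
  · simp [hadd, h0, eq_comm]
  · by_cases hw0 : w = 0
    · simp [hadd, h0, hw0, Ne.symm h0, neg_eq_zero]
    · by_cases h1 : w = -u
      · simp [hadd, h0, hw0, h1, zero_mem_Phi]
      · simp only [hadd, if_neg h0, if_neg hw0, if_neg h1]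
        simp only [h0, h1, hw0, false_and, and_false, or_self, iff_false, and_true, ne_eq,
          not_false_iff, true_and]
        exact zero_not_mem_smallArc (abs_of_mem_Phi hu h0) (abs_of_mem_Phi hw hw0) h1
lemma zero_ne_of_abs {z : ℂ} (hz : ‖z‖ = 1) : z ≠ 0 := by
  intro h; rw [h] at hz; simp at hz

lemma triple_of_left_neg {u v z : ℂ} (hv : v ∈ Phi) (hz : ‖z‖ = 1)
    (hu : u = -z) : (0:ℂ) ∈ haddList [u, v, z] := by
  have hz0 : z ≠ 0 := zero_ne_of_abs hz
  have hu0 : u ≠ 0 := by rw [hu]; simpa using hz0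
  refine mem_haddList_triple.2 ⟨z, right_mem_hadd hv hz, ?_⟩
  have : z = -u := by rw [hu]; ring
  rw [this, hadd_neg_self hu0]
  exact zero_mem_Phi

lemma triple_of_right_neg {u v z : ℂ} (hu : u ∈ Phi) (hz : ‖z‖ = 1)
    (hv : v = -z) : (0:ℂ) ∈ haddList [u, v, z] := by
  have hz0 : z ≠ 0 := zero_ne_of_abs hz
  have hv0 : v ≠ 0 := by rw [hv]; simpa using hz0
  have hPhi : hadd v z = Phi := by
    have : z = -v := by rw [hv]; ring
    rw [this, hadd_neg_self hv0]
  by_cases h0 : u = 0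
  · refine mem_haddList_triple.2 ⟨0, ?_, ?_⟩
    · rw [hPhi]; exact zero_mem_Phi
    · rw [h0, hadd_zero_left]; rfl
  · refine mem_haddList_triple.2 ⟨-u, ?_, ?_⟩
    · rw [hPhi]; exact neg_mem_Phi hu
    · rw [hadd_neg_self h0]; exact zero_mem_Phi

lemma triple_of_combo {u v z : ℂ} (hu : ‖u‖ = 1) (hv : ‖v‖ = 1)
    (hz : ‖z‖ = 1) (hvz : v ≠ -z) (b c : ℝ) (hb : 0 ≤ b) (hc : 0 ≤ c)
    (h : u + (b:ℂ) * v + (c:ℂ) * z = 0) : (0:ℂ) ∈ haddList [u, v, z] := by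
  have hu0 : u ≠ 0 := zero_ne_of_abs hu
  have hv0 : v ≠ 0 := zero_ne_of_abs hv
  have hz0 : z ≠ 0 := zero_ne_of_abs hz
  have hzv : z ≠ -v := fun hh => hvz (by rw [hh]; ring)
  have harc : hadd v z = smallArc v z := by rw [hadd, if_neg hv0, if_neg hz0, if_neg hzv]
  refine mem_haddList_triple.2 ⟨-u, ?_, ?_⟩
  · rw [harc]
    refine smallArc_combo (by simpa using hu) b c hb hc (by linear_combination h)
  · rw [hadd_neg_self hu0]; exact zero_mem_Phi

/-- Monotonicity of triple condition. -/
lemma mono_triple {u1 v1 u2 v2 z : ℂ} (hu2 : u2 ∈ Phi) (hv2 : v2 ∈ Phi)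
    (hz : ‖z‖ = 1)
    (hu : u1 = u2 ∨ u1 = 0) (hv : v1 = v2 ∨ v1 = 0)
    (h : (0:ℂ) ∈ haddList [u1, v1, z]) : (0:ℂ) ∈ haddList [u2, v2, z] := by
  have hz0 : z ≠ 0 := zero_ne_of_abs hz
  have hzPhi : z ∈ Phi := mem_Phi_of_abs hz
  have hu1 : u1 ∈ Phi := by rcases hu with h' | h' <;> rw [h'] <;> [exact hu2; exact zero_mem_Phi]
  have hv1 : v1 ∈ Phi := by rcases hv with h' | h' <;> rw [h'] <;> [exact hv2; exact zero_mem_Phi]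
  by_cases hu10 : u1 = 0
  · -- 0 ∈ hadd v1 z essentially
    rcases mem_haddList_triple.1 h with ⟨w, hw1, hw2⟩
    rw [hu10, hadd_zero_left] at hw2
    have hw0 : w = 0 := by simpa [eq_comm] using hw2
    rw [hw0] at hw1
    rcases (zero_mem_hadd_iff hv1 hzPhi).1 hw1 with ⟨_, hz00⟩ | ⟨hv10, hzv⟩
    · exact absurd hz00 hz0
    · -- z = -v1, v1 ≠ 0 so v2 = v1
      have hv2e : v2 = v1 := (hv.resolve_right hv10).symm
      exact triple_of_right_neg hu2 hz (by rw [hv2e]; linear_combination hzv)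
  · have hu2e : u2 = u1 := (hu.resolve_right hu10).symm
    rcases mem_haddList_triple.1 h with ⟨w, hw1, hw2⟩
    -- 0 ∈ hadd u1 w, so w = -u1 (w ∈ Phi needed?) or both 0
    have hwPhi : w ∈ Phi := by
      by_cases hv10 : v1 = 0
      · rw [hv10, hadd_zero_left] at hw1
        rw [show w = z by simpa using hw1]; exact hzPhi
      · by_cases hzv : z = -v1
        · rw [hadd, if_neg hv10, if_neg hz0, if_pos hzv] at hw1; exact hw1
        · rw [hadd, if_neg hv10, if_neg hz0, if_neg hzv] at hw1
          rcases hw1 with ⟨a, b, ha, hb, hab, heq⟩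
          by_cases hN : (a:ℂ) * v1 + (b:ℂ) * z = 0
          · rw [heq, hN]; simpa using zero_mem_Phi
          · rw [heq]
            apply mem_Phi_of_abs
            rw [norm_div]
            simp only [Complex.norm_real, Real.norm_eq_abs, abs_norm]
            rw [div_self (by simpa using hN)]
    rcases (zero_mem_hadd_iff hu1 hwPhi).1 hw2 with ⟨h', _⟩ | ⟨_, hwu⟩
    · exact absurd h' hu10
    · -- w = -u1 ∈ hadd v1 z
      rw [hwu] at hw1
      by_cases hv10 : v1 = 0
      · -- hadd 0 z = {z}: -u1 = z
        rw [hv10, hadd_zero_left] at hw1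
        have : u1 = -z := by have := hw1; simp at this; linear_combination -this
        exact triple_of_left_neg hv2 hz (by rw [hu2e]; exact this)
      · have hv2e : v2 = v1 := (hv.resolve_right hv10).symm
        -- cases on hadd v1 z
        by_cases hzv : z = -v1
        · exact triple_of_right_neg hu2 hz (by rw [hv2e]; linear_combination hzv)
        · rw [hadd, if_neg hv10, if_neg hz0, if_neg hzv] at hw1
          rcases hw1 with ⟨a, b, ha, hb, hab, heq⟩
          have hN : (a:ℂ) * v1 + (b:ℂ) * z ≠ 0 := by
            intro hN
            rw [hN] at heq; simp at heq
            exact hu10 (by simpa using heq)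
          have habs : ‖(a:ℂ) * v1 + (b:ℂ) * z‖ ≠ 0 := by simpa using hN
          have habs' : (0:ℝ) < ‖(a:ℂ) * v1 + (b:ℂ) * z‖ := by
            rcases lt_or_eq_of_le (norm_nonneg ((a:ℂ) * v1 + (b:ℂ) * z)) with h' | h'
            · exact h'
            · exact absurd h'.symm habs
          -- -u1 * abs = a v1 + b z
          have key : u1 + ((a / ‖(a:ℂ)*v1+(b:ℂ)*z‖ : ℝ):ℂ) * v1
              + ((b / ‖(a:ℂ)*v1+(b:ℂ)*z‖ : ℝ):ℂ) * z = 0 := by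
            have habsC : ((‖(a:ℂ)*v1+(b:ℂ)*z‖ : ℝ):ℂ) ≠ 0 := by
              simpa using habs
            push_cast
            linear_combination -heq
          rw [hu2e, hv2e]
          exact triple_of_combo (abs_of_mem_Phi hu1 hu10) (abs_of_mem_Phi hv1 hv10) hz
            (fun hh => hzv (by rw [hh]; ring))
            _ _ (div_nonneg ha habs'.le) (div_nonneg hb habs'.le) key
lemma haddList_all_zero : ∀ l : List ℂ, (∀ u ∈ l, u = 0) → haddList l = {0} := by
  intro l
  induction l with
  | nil => intro _; rfl
  | cons a t ih =>
    intro h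
    rw [haddList_cons, ih (fun u hu => h u (List.mem_cons_of_mem a hu)),
      h a (List.mem_cons_self)]
    simp [hadd_zero_left]

lemma sum_cons_aux (u : ℂ) (t : List ℂ) (b : Fin (t.length + 1) → ℝ) :
    (∑ i : Fin ((u :: t).length), ((b i : ℝ) : ℂ) * (u :: t).get i)
      = ((b 0 : ℝ) : ℂ) * u + ∑ i : Fin t.length, ((b i.succ : ℝ) : ℂ) * t.get i := by
  show (∑ i : Fin (t.length + 1), ((b i : ℝ) : ℂ) * (u :: t).get i) = _
  rw [Fin.sum_univ_succ]
  rfl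

lemma haddList_char : ∀ (l : List ℂ), (∀ u ∈ l, u ∈ Phi) → ∀ w ∈ haddList l,
    w ∈ Phi ∧ ∃ a : Fin l.length → ℝ, (∀ i, 0 ≤ a i) ∧ ∃ r : ℝ, 0 ≤ r ∧
      (∑ i, (a i : ℂ) * l.get i) = (r:ℂ) * w ∧
      ((∃ i, 0 < a i ∧ l.get i ≠ 0) ∨ (w ≠ 0 ∧ 0 < r) ∨ ∀ u ∈ l, u = 0) := by
  intro l
  induction l with
  | nil =>
    intro _ w hw
    have hw0 : w = 0 := hw
    refine ⟨by rw [hw0]; exact zero_mem_Phi, fun i => 0, fun i => le_refl _, 0, le_refl _, ?_, ?_⟩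
    · simp [hw0]
    · exact Or.inr (Or.inr (by simp))
  | cons u t ih =>
    intro hPhi w hw
    have huPhi : u ∈ Phi := hPhi u (List.mem_cons_self)
    have htPhi : ∀ v ∈ t, v ∈ Phi := fun v hv => hPhi v (List.mem_cons_of_mem u hv)
    rw [haddList_cons] at hw
    simp only [Set.mem_iUnion, exists_prop] at hw
    obtain ⟨w', hw', hww⟩ := hw
    obtain ⟨hw'Phi, a, ha, r, hr, hsum, hnt⟩ := ih htPhi w' hw'
    by_cases hu0 : u = 0
    · rw [hu0, hadd_zero_left] at hww
      have hwe : w = w' := hww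
      subst hwe
      refine ⟨hw'Phi, Fin.cons 0 a, fun i => Fin.cases (le_refl _) (fun j => ha j) i,
        r, hr, ?_, ?_⟩
      · rw [sum_cons_aux u t (Fin.cons 0 a)]
        simpa [hu0] using hsum
      · rcases hnt with ⟨i, hi⟩ | h' | h'
        · exact Or.inl ⟨i.succ, by simpa using hi⟩
        · exact Or.inr (Or.inl h')
        · refine Or.inr (Or.inr ?_)
          intro v hv
          rcases List.mem_cons.1 hv with h'' | h''
          · rw [h'']; exact hu0
          · exact h' v h''
    · by_cases hw'u : w' = -u
      · -- hadd u w' = Phi : take combo with r' = 0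
        rw [hadd, if_neg hu0, if_neg (by rw [hw'u]; simpa using hu0), if_pos hw'u] at hww
        refine ⟨hww, Fin.cons r a, fun i => Fin.cases hr (fun j => ha j) i,
          0, le_refl _, ?_, ?_⟩
        · rw [sum_cons_aux u t (Fin.cons r a)]
          simp only [Fin.cons_zero, Fin.cons_succ]
          rw [hsum, hw'u]
          push_cast
          ring
        · rcases lt_or_eq_of_le hr with hr' | hr'
          · refine Or.inl ⟨(0 : Fin (t.length+1)), by simpa using hr', by simpa using hu0⟩
          · rcases hnt with ⟨i, hi⟩ | h' | h'
            · exact Or.inl ⟨i.succ, by simpa using hi⟩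
            · exact absurd h'.2 (by rw [← hr']; exact lt_irrefl 0)
            · exfalso
              have hz := haddList_all_zero t h'
              rw [hz] at hw'
              have : w' = 0 := hw'
              rw [hw'u] at this
              exact hu0 (by simpa using this)
      · by_cases hw'0 : w' = 0
        · -- hadd u 0 = {u}, w = u
          rw [hadd, if_neg hu0, if_pos hw'0] at hww
          have hwe : w = u := hww
          refine ⟨by rw [hwe]; exact huPhi, Fin.cons 1 (fun _ => 0),
            fun i => Fin.cases zero_le_one (fun j => le_refl _) i, 1, zero_le_one, ?_, ?_⟩
          · rw [sum_cons_aux u t (Fin.cons 1 (fun _ => 0))]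
            simp [hwe]
          · refine Or.inl ⟨(0 : Fin (t.length+1)), by norm_num, by simpa using hu0⟩
        · -- smallArc case
          rw [hadd, if_neg hu0, if_neg hw'0, if_neg hw'u] at hww
          obtain ⟨s, tt, hs, htt, hstt, heq⟩ := hww
          have huA : ‖u‖ = 1 := abs_of_mem_Phi huPhi hu0
          have hw'A : ‖w'‖ = 1 := abs_of_mem_Phi hw'Phi hw'0
          have hN : (s:ℂ) * u + (tt:ℂ) * w' ≠ 0 := by
            intro hN0
            have h1 : (s:ℂ) * u = -((tt:ℂ) * w') := by linear_combination hN0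
            have h2 : s = tt := by
              have := congrArg (fun z : ℂ => ‖z‖) h1
              rw [norm_neg] at this
              simpa [norm_mul, huA, hw'A, Complex.norm_real, Real.norm_eq_abs, _root_.abs_of_nonneg hs,
                _root_.abs_of_nonneg htt] using this
            have hs0 : 0 < tt := by rw [h2] at hstt; linarith
            apply hw'u
            have hbne : (tt:ℂ) ≠ 0 := by exact_mod_cast hs0.ne'
            rw [h2] at h1
            have : (tt:ℂ) * w' = (tt:ℂ) * (-u) := by linear_combination h1
            exact mul_left_cancel₀ hbne this
          set D := ‖(s:ℂ) * u + (tt:ℂ) * w'‖ with hD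
          have hD0 : 0 < D := by
            rcases lt_or_eq_of_le (norm_nonneg ((s:ℂ) * u + (tt:ℂ) * w')) with h' | h'
            · exact h'
            · exact absurd h'.symm (by simpa [hD] using hN)
          have hDC : ((D:ℝ):ℂ) ≠ 0 := by
            simp only [ne_eq, Complex.ofReal_eq_zero]; exact hD0.ne'
          have hwA : ‖w‖ = 1 := by
            rw [heq, norm_div]
            simp only [Complex.norm_real, Real.norm_eq_abs, abs_norm]
            rw [_root_.abs_of_nonneg hD0.le, ← hD, div_self hD0.ne']
          have hwPhi : w ∈ Phi := mem_Phi_of_abs hwA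
          rcases lt_or_eq_of_le hr with hr' | hr'
          · -- r > 0 : combo (s*r, tt*a) = r*D*w
            refine ⟨hwPhi, Fin.cons (s*r) (fun i => tt * a i),
              fun i => Fin.cases (mul_nonneg hs hr) (fun j => mul_nonneg htt (ha j)) i,
              r * D, by positivity, ?_, ?_⟩
            · rw [sum_cons_aux u t (Fin.cons (s*r) (fun i => tt * a i))]
              simp only [Fin.cons_zero, Fin.cons_succ]
              rw [show (∑ i : Fin t.length, (((tt * a i : ℝ)):ℂ) * t.get i)
                  = ∑ i : Fin t.length, ((tt:ℂ) * ((a i:ℂ) * t.get i)) from by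
                apply Finset.sum_congr rfl; intro i _; push_cast; ring]
              rw [← Finset.mul_sum, hsum, heq]
              push_cast
              field_simp
            · exact Or.inr (Or.inl ⟨zero_ne_of_abs hwA, by positivity⟩)
          · -- r = 0: keep (0, a), r' = 0
            refine ⟨hwPhi, Fin.cons 0 a, fun i => Fin.cases (le_refl _) (fun j => ha j) i,
              0, le_refl _, ?_, ?_⟩
            · rw [sum_cons_aux u t (Fin.cons 0 a)]
              simp only [Fin.cons_zero, Fin.cons_succ]
              rw [hsum, ← hr']
              push_cast
              ring
            · rcases hnt with ⟨i, hi⟩ | h' | h'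
              · exact Or.inl ⟨i.succ, by simpa using hi⟩
              · exact absurd h'.2 (by rw [← hr']; exact lt_irrefl 0)
              · exfalso
                have hz := haddList_all_zero t h'
                rw [hz] at hw'
                exact hw'0 hw'
lemma real_unit_cases {w : ℂ} (hA : ‖w‖ = 1) (him : w.im = 0) : w = 1 ∨ w = -1 := by
  have hw : w = ((w.re : ℝ) : ℂ) := Complex.ext rfl (by simp [him])
  rw [hw] at hA
  rw [Complex.norm_real, Real.norm_eq_abs] at hA
  rcases abs_eq (zero_le_one) |>.1 hA with h | h
  · left; rw [hw, h]; norm_num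
  · right; rw [hw, h]; norm_num

lemma geom1 {m : ℕ} (w : Fin m → ℂ) (a : Fin m → ℝ)
    (hw : ∀ i, w i ∈ Phi) (ha : ∀ i, 0 ≤ a i)
    (hsum : ∑ i, (a i : ℂ) * w i = 0)
    (hnt : ∃ i, 0 < a i ∧ w i ≠ 0) :
    (∃ j, w j = -1) ∨
    (∃ j k, (w j).im > 0 ∧ (w k).im < 0 ∧
      ∃ b c : ℝ, 0 ≤ b ∧ 0 ≤ c ∧ w j + (b:ℂ) * w k + (c:ℂ) = 0) := by
  by_cases hneg : ∃ j, w j = -1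
  · exact Or.inl hneg
  push_neg at hneg
  right
  set T := Finset.univ.filter (fun i => 0 < a i ∧ w i ≠ 0) with hT
  have hmemT : ∀ i, i ∈ T ↔ (0 < a i ∧ w i ≠ 0) := by
    intro i; simp [hT]
  have hre : ∑ i ∈ T, a i * (w i).re = 0 := by
    have h1 : (∑ i, (a i : ℂ) * w i).re = 0 := by rw [hsum]; rfl
    rw [Complex.re_sum] at h1
    have h2 : ∑ i, ((a i : ℂ) * w i).re = ∑ i, a i * (w i).re := by
      apply Finset.sum_congr rfl; intro i _; simp [Complex.re_ofReal_mul]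
    rw [h2] at h1
    rw [← h1]
    apply Finset.sum_subset (Finset.subset_univ T)
    intro i _ hi
    rw [hmemT] at hi
    push_neg at hi
    rcases eq_or_lt_of_le (ha i) with h' | h'
    · rw [← h']; ring
    · rw [hi h', Complex.zero_re]; ring
  have him : ∑ i ∈ T, a i * (w i).im = 0 := by
    have h1 : (∑ i, (a i : ℂ) * w i).im = 0 := by rw [hsum]; rfl
    rw [Complex.im_sum] at h1
    have h2 : ∑ i, ((a i : ℂ) * w i).im = ∑ i, a i * (w i).im := by
      apply Finset.sum_congr rfl; intro i _; simp [Complex.im_ofReal_mul]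
    rw [h2] at h1
    rw [← h1]
    apply Finset.sum_subset (Finset.subset_univ T)
    intro i _ hi
    rw [hmemT] at hi
    push_neg at hi
    rcases eq_or_lt_of_le (ha i) with h' | h'
    · rw [← h']; ring
    · rw [hi h', Complex.zero_im]; ring
  have hZone : ∀ i ∈ T, (w i).im = 0 → w i = 1 := by
    intro i hi him0
    rw [hmemT] at hi
    rcases real_unit_cases (abs_of_mem_Phi (hw i) hi.2) him0 with h' | h'
    · exact h'
    · exact absurd h' (hneg i)
  set P := T.filter (fun i => 0 < (w i).im) with hP
  set N := T.filter (fun i => (w i).im < 0) with hN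
  set Z := T.filter (fun i => (w i).im = 0) with hZ
  have hsplitf : ∀ g : Fin m → ℝ,
      ∑ i ∈ T, g i = ∑ i ∈ P, g i + (∑ i ∈ N, g i + ∑ i ∈ Z, g i) := by
    intro g
    rw [← Finset.sum_filter_add_sum_filter_not T (fun i => 0 < (w i).im) g]
    congr 1
    rw [← Finset.sum_filter_add_sum_filter_not (T.filter (fun i => ¬ 0 < (w i).im))
      (fun i => (w i).im < 0) g]
    congr 1
    · rw [hN]; congr 1; ext i; simp only [Finset.mem_filter, and_assoc]
      constructor
      · rintro ⟨h1, _, h3⟩; exact ⟨h1, h3⟩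
      · rintro ⟨h1, h3⟩; exact ⟨h1, by linarith, h3⟩
    · rw [hZ]; congr 1; ext i; simp only [Finset.mem_filter, and_assoc]
      constructor
      · rintro ⟨h1, h2, h3⟩; push_neg at h2 h3; exact ⟨h1, le_antisymm h2 h3⟩
      · rintro ⟨h1, h3⟩; exact ⟨h1, by rw [h3]; exact lt_irrefl 0, by rw [h3]; exact lt_irrefl 0⟩
  have hZim : ∑ i ∈ Z, a i * (w i).im = 0 := by
    apply Finset.sum_eq_zero; intro i hi
    rw [hZ, Finset.mem_filter] at hi
    rw [hi.2]; ring
  have hZre : 0 ≤ ∑ i ∈ Z, a i * (w i).re := by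
    apply Finset.sum_nonneg; intro i hi
    rw [hZ, Finset.mem_filter] at hi
    rw [hZone i hi.1 hi.2]
    simp only [Complex.one_re, mul_one]
    exact le_of_lt ((hmemT i).1 hi.1).1
  have hTnonempty : T.Nonempty := by
    obtain ⟨i, hi1, hi2⟩ := hnt
    exact ⟨i, (hmemT i).2 ⟨hi1, hi2⟩⟩
  have hPne : P.Nonempty := by
    by_contra hPe
    rw [Finset.not_nonempty_iff_eq_empty] at hPe
    have h1 := hsplitf (fun i => a i * (w i).im)
    rw [hPe, Finset.sum_empty, him, hZim] at h1
    have hNe : N = ∅ := by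
      by_contra hNe
      have hlt : 0 < ∑ i ∈ N, -(a i * (w i).im) := by
        apply Finset.sum_pos
        · intro i hi
          rw [hN, Finset.mem_filter] at hi
          have := mul_neg_of_pos_of_neg ((hmemT i).1 hi.1).1 hi.2
          linarith
        · exact Finset.nonempty_of_ne_empty hNe
      rw [Finset.sum_neg_distrib] at hlt
      linarith
    have hTZ : T = Z := by
      ext i
      constructor
      · intro hi
        rw [hZ, Finset.mem_filter]
        refine ⟨hi, ?_⟩
        by_contra him0
        rcases lt_or_gt_of_ne him0 with h' | h'
        · have : i ∈ N := by rw [hN, Finset.mem_filter]; exact ⟨hi, h'⟩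
          rw [hNe] at this; exact absurd this (Finset.notMem_empty i)
        · have : i ∈ P := by rw [hP, Finset.mem_filter]; exact ⟨hi, h'⟩
          rw [hPe] at this; exact absurd this (Finset.notMem_empty i)
      · intro hi; rw [hZ, Finset.mem_filter] at hi; exact hi.1
    have : 0 < ∑ i ∈ T, a i * (w i).re := by
      apply Finset.sum_pos'
      · intro i hi
        have hiZ : i ∈ Z := by rw [← hTZ]; exact hi
        rw [hZ, Finset.mem_filter] at hiZ
        rw [hZone i hi hiZ.2]
        simp only [Complex.one_re, mul_one]
        exact le_of_lt ((hmemT i).1 hi).1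
      · obtain ⟨i, hi⟩ := hTnonempty
        refine ⟨i, hi, ?_⟩
        have hiZ : i ∈ Z := by rw [← hTZ]; exact hi
        rw [hZ, Finset.mem_filter] at hiZ
        rw [hZone i hi hiZ.2]
        simp only [Complex.one_re, mul_one]
        exact ((hmemT i).1 hi).1
    linarith
  have hNne : N.Nonempty := by
    by_contra hNe
    rw [Finset.not_nonempty_iff_eq_empty] at hNe
    have h1 := hsplitf (fun i => a i * (w i).im)
    rw [hNe, Finset.sum_empty, him, hZim] at h1
    obtain ⟨j, hj⟩ := hPne
    have hjP := hj
    rw [hP, Finset.mem_filter] at hjP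
    have : 0 < ∑ i ∈ P, a i * (w i).im := by
      apply Finset.sum_pos'
      · intro i hi
        rw [hP, Finset.mem_filter] at hi
        exact mul_nonneg (ha i) (le_of_lt hi.2)
      · exact ⟨j, hj, mul_pos ((hmemT j).1 hjP.1).1 hjP.2⟩
    linarith
  have hpair : ∃ j ∈ P, ∃ k ∈ N, (w j).im * (w k).re - (w k).im * (w j).re ≤ 0 := by
    by_contra hc
    push_neg at hc
    have hpos : 0 < ∑ j ∈ P, ∑ k ∈ N, (a j * (w j).im) * (a k * (w k).re)
        - ∑ j ∈ P, ∑ k ∈ N, (a j * (w j).re) * (a k * (w k).im) := by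
      rw [← Finset.sum_sub_distrib]
      apply Finset.sum_pos
      · intro j hj
        rw [← Finset.sum_sub_distrib]
        apply Finset.sum_pos
        · intro k hk
          have hjP := hj; rw [hP, Finset.mem_filter] at hjP
          have hkN := hk; rw [hN, Finset.mem_filter] at hkN
          have haj : 0 < a j := ((hmemT j).1 hjP.1).1
          have hak : 0 < a k := ((hmemT k).1 hkN.1).1
          have hcc := hc j hj k hk
          nlinarith [mul_pos (mul_pos haj hak) hcc]
        · exact hNne
      · exact hPne
    rw [← Finset.sum_mul_sum, ← Finset.sum_mul_sum] at hpos
    have h1 := hsplitf (fun i => a i * (w i).im)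
    have h2 := hsplitf (fun i => a i * (w i).re)
    rw [him, hZim] at h1
    rw [hre] at h2
    have hsP : 0 < ∑ i ∈ P, a i * (w i).im := by
      apply Finset.sum_pos
      · intro i hi
        rw [hP, Finset.mem_filter] at hi
        exact mul_pos ((hmemT i).1 hi.1).1 hi.2
      · exact hPne
    have e1 : ∑ i ∈ N, a i * (w i).im = -(∑ i ∈ P, a i * (w i).im) := by linarith
    have e2 : ∑ i ∈ N, a i * (w i).re
        = -(∑ i ∈ P, a i * (w i).re) - ∑ i ∈ Z, a i * (w i).re := by linarith
    rw [e1, e2] at hpos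
    nlinarith [mul_nonneg hsP.le hZre]
  obtain ⟨j, hj, k, hk, hR⟩ := hpair
  have hjP := hj; rw [hP, Finset.mem_filter] at hjP
  have hkN := hk; rw [hN, Finset.mem_filter] at hkN
  have himj : 0 < (w j).im := hjP.2
  have himk : (w k).im < 0 := hkN.2
  have hk0 : (w k).im ≠ 0 := ne_of_lt himk
  refine ⟨j, k, himj, himk, (w j).im / (-(w k).im),
    ((w j).im * (w k).re - (w k).im * (w j).re) / (w k).im, ?_, ?_, ?_⟩
  · apply div_nonneg (le_of_lt himj); linarith
  · rw [div_nonneg_iff]; right; exact ⟨hR, le_of_lt himk⟩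
  · rw [Complex.ext_iff]
    constructor
    · simp only [Complex.add_re, Complex.mul_re, Complex.ofReal_re, Complex.ofReal_im,
        Complex.zero_re]
      field_simp [hk0]
      ring
    · simp only [Complex.add_im, Complex.mul_im, Complex.ofReal_re, Complex.ofReal_im,
        Complex.zero_im]
      field_simp [hk0]
      ring
lemma triple_of_combo' {u v z : ℂ} (hu : ‖u‖ = 1) (hv : ‖v‖ = 1)
    (hz : ‖z‖ = 1) (hvz : v ≠ -z) (b c : ℝ) (hb : 0 ≤ b) (hc : 0 ≤ c)
    (h : v + (b:ℂ) * u + (c:ℂ) * z = 0) : (0:ℂ) ∈ haddList [u, v, z] := by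
  have hu0 : u ≠ 0 := zero_ne_of_abs hu
  have hv0 : v ≠ 0 := zero_ne_of_abs hv
  have hz0 : z ≠ 0 := zero_ne_of_abs hz
  rcases eq_or_lt_of_le hb with hb0 | hb0
  · exfalso
    have hveq : v = -(c:ℂ) * z := by rw [← hb0] at h; push_cast at h; linear_combination h
    have hc1 : c = 1 := by
      have := congrArg (fun z : ℂ => ‖z‖) hveq
      rw [hv] at this
      rw [show (-(c:ℂ) * z) = ((-c : ℝ):ℂ) * z by push_cast; ring] at this
      rw [norm_mul, Complex.norm_real, Real.norm_eq_abs, hz, mul_one, abs_neg, _root_.abs_of_nonneg hc] at this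
      linarith
    exact hvz (by rw [hveq, hc1]; push_cast; ring)
  · have hzv : z ≠ -v := fun hh => hvz (by rw [hh]; ring)
    have harc : hadd v z = smallArc v z := by rw [hadd, if_neg hv0, if_neg hz0, if_neg hzv]
    refine mem_haddList_triple.2 ⟨-u, ?_, ?_⟩
    · rw [harc]
      refine smallArc_combo (by simpa using hu) (1/b) (c/b) (by positivity)
        (div_nonneg hc hb0.le) ?_
      have hbC : (b:ℂ) ≠ 0 := by exact_mod_cast hb0.ne'
      push_cast
      field_simp
      linear_combination h
    · rw [hadd_neg_self hu0]; exact zero_mem_Phi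

lemma exists_triple {n : ℕ} (hn : 2 ≤ n) (x : Fin (n+1) → ℂ)
    (hx : ∀ k, x k ∈ Phi) (hz : ‖x (Fin.last n)‖ = 1)
    (h0 : (0:ℂ) ∈ haddList (List.ofFn x)) :
    ∃ j k : Fin (n+1), j < k ∧ k < Fin.last n ∧
      (0:ℂ) ∈ haddList [x j, x k, x (Fin.last n)] := by
  classical
  set z := x (Fin.last n) with hzdef
  have hz0 : z ≠ 0 := zero_ne_of_abs hz
  have hzz : z * (starRingEnd ℂ) z = 1 := by
    rw [Complex.mul_conj, Complex.normSq_eq_norm_sq, hz]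
    norm_num
  have hconj0 : (starRingEnd ℂ) z ≠ 0 := by
    intro h
    apply hz0
    have := congrArg (starRingEnd ℂ) h
    simpa using this
  obtain ⟨-, a, ha, r, hr, hsum, hnt⟩ := haddList_char (List.ofFn x)
    (by rw [List.forall_mem_ofFn_iff]; exact fun j => hx j) 0 h0
  rw [mul_zero] at hsum
  set w : Fin (List.ofFn x).length → ℂ :=
    fun i => (starRingEnd ℂ) z * (List.ofFn x).get i with hwdef
  have hget : ∀ i : Fin (List.ofFn x).length, (List.ofFn x).get i = x (Fin.cast (List.length_ofFn (f := x)) i) :=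
    fun i => List.get_ofFn x i
  have hwe : ∀ i : Fin (List.ofFn x).length, w i = (starRingEnd ℂ) z * x (Fin.cast (List.length_ofFn (f := x)) i) := by
    intro i; rw [hwdef]; simp only; rw [hget]
  have hwPhi : ∀ i, w i ∈ Phi := by
    intro i
    rw [hwe]
    rcases mem_Phi_iff.1 (hx (Fin.cast (List.length_ofFn (f := x)) i)) with h' | h'
    · apply mem_Phi_of_abs
      rw [norm_mul, Complex.norm_conj, hz, one_mul, h']
    · rw [h', mul_zero]; exact zero_mem_Phi
  have hwsum : ∑ i, (a i : ℂ) * w i = 0 := by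
    have : ∑ i, (a i:ℂ) * w i = (starRingEnd ℂ) z * ∑ i, (a i:ℂ) * (List.ofFn x).get i := by
      rw [Finset.mul_sum]
      apply Finset.sum_congr rfl
      intro i _
      rw [hwdef]
      ring
    rw [this, hsum, mul_zero]
  have hwnt : ∃ i, 0 < a i ∧ w i ≠ 0 := by
    rcases hnt with ⟨i, hi1, hi2⟩ | ⟨hww, -⟩ | hall
    · exact ⟨i, hi1, by rw [hwdef]; exact mul_ne_zero hconj0 hi2⟩
    · exact absurd rfl hww
    · exfalso
      apply hz0
      exact hall z ((List.mem_ofFn (f := x) (a := z)).2 ⟨Fin.last n, rfl⟩)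
  have hlastval : ∀ i : Fin (List.ofFn x).length, Fin.cast (List.length_ofFn (f := x)) i = Fin.last n →
      w i = 1 := by
    intro i hi
    rw [hwe, hi, ← hzdef, mul_comm]
    exact hzz
  rcases geom1 w a hwPhi ha hwsum hwnt with ⟨j', hj'⟩ | ⟨j', k', himj, himk, b, c, hb, hc, hcomb⟩
  · -- some coordinate equals -z
    set j0 := Fin.cast (List.length_ofFn (f := x)) j' with hj0
    have hxj : x j0 = -z := by
      have h1 : (starRingEnd ℂ) z * x j0 = -1 := by rw [← hwe]; exact hj'
      calc x j0 = (z * (starRingEnd ℂ) z) * x j0 := by rw [hzz, one_mul]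
        _ = z * ((starRingEnd ℂ) z * x j0) := by ring
        _ = z * (-1) := by rw [h1]
        _ = -z := by ring
    have hj0last : j0 ≠ Fin.last n := by
      intro h
      apply hz0
      have h2 : z = -z := by
        conv_lhs => rw [hzdef, ← h]
        exact hxj
      have h3 : (2:ℂ) * z = 0 := by linear_combination h2
      simpa using h3
    have hj0lt : j0 < Fin.last n := lt_of_le_of_ne (Fin.le_last j0) hj0last
    have h0n : (0:ℕ) < n + 1 := by omega
    have h1n : (1:ℕ) < n + 1 := by omega
    by_cases hj00 : j0 = ⟨0, h0n⟩
    · refine ⟨j0, ⟨1, h1n⟩, ?_, ?_, ?_⟩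
      · rw [hj00]; exact Fin.mk_lt_mk.2 (by omega)
      · rw [Fin.lt_iff_val_lt_val]; simpa using by omega
      · exact triple_of_left_neg (hx ⟨1, h1n⟩) hz hxj
    · refine ⟨⟨0, h0n⟩, j0, ?_, hj0lt, ?_⟩
      · rw [Fin.lt_iff_val_lt_val]
        simp only
        have : j0.val ≠ 0 := fun h => hj00 (Fin.ext h)
        omega
      · exact triple_of_right_neg (hx ⟨0, h0n⟩) hz hxj
  · -- combination case
    set j0 := Fin.cast (List.length_ofFn (f := x)) j' with hj0
    set k0 := Fin.cast (List.length_ofFn (f := x)) k' with hk0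
    have hwj : w j' = (starRingEnd ℂ) z * x j0 := hwe j'
    have hwk : w k' = (starRingEnd ℂ) z * x k0 := hwe k'
    have hwj0 : w j' ≠ 0 := by intro h; rw [h] at himj; simp at himj
    have hwk0 : w k' ≠ 0 := by intro h; rw [h] at himk; simp at himk
    have hxj0 : x j0 ≠ 0 := by
      intro h; apply hwj0; rw [hwj, h, mul_zero]
    have hxk0 : x k0 ≠ 0 := by
      intro h; apply hwk0; rw [hwk, h, mul_zero]
    have hxjA : ‖x j0‖ = 1 := abs_of_mem_Phi (hx j0) hxj0
    have hxkA : ‖x k0‖ = 1 := abs_of_mem_Phi (hx k0) hxk0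
    have hcombx : x j0 + (b:ℂ) * x k0 + (c:ℂ) * z = 0 := by
      rw [hwj, hwk] at hcomb
      linear_combination z * hcomb - (x j0 + (b:ℂ) * x k0) * hzz
    have hjlast : j0 ≠ Fin.last n := by
      intro h
      have := hlastval j' h
      rw [this] at himj
      simp at himj
    have hklast : k0 ≠ Fin.last n := by
      intro h
      have := hlastval k' h
      rw [this] at himk
      simp at himk
    have hxjneg : x j0 ≠ -z := by
      intro h
      have : w j' = -1 := by
        rw [hwj, h]
        have : (starRingEnd ℂ) z * z = 1 := by rw [mul_comm]; exact hzz
        linear_combination -this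
      rw [this] at himj
      simp at himj
    have hxkneg : x k0 ≠ -z := by
      intro h
      have : w k' = -1 := by
        rw [hwk, h]
        have : (starRingEnd ℂ) z * z = 1 := by rw [mul_comm]; exact hzz
        linear_combination -this
      rw [this] at himk
      simp at himk
    have hjk : j0 ≠ k0 := by
      intro h
      have hj'k' : j' = k' := by
        apply Fin.ext
        have := congrArg Fin.val h
        simpa [hj0, hk0] using this
      rw [hj'k'] at himj
      linarith
    have hjlt : j0 < Fin.last n := lt_of_le_of_ne (Fin.le_last j0) hjlast
    have hklt : k0 < Fin.last n := lt_of_le_of_ne (Fin.le_last k0) hklast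
    rcases lt_or_gt_of_ne hjk with h | h
    · exact ⟨j0, k0, h, hklt,
        triple_of_combo hxjA hxkA hz hxkneg b c hb hc hcombx⟩
    · exact ⟨k0, j0, h, hjlt,
        triple_of_combo' hxkA hxjA hz hxjneg b c hb hc hcombx⟩
lemma suppCard_lt_of_lt {n : ℕ} {x y : Fin n → ℂ} (h : phiLEn x y) (hne : x ≠ y) :
    suppCard x < suppCard y := by
  have hsub : (Finset.univ.filter (fun j => x j ≠ 0)) ⊆ (Finset.univ.filter (fun j => y j ≠ 0)) := by
    intro j hj
    rw [Finset.mem_filter] at hj ⊢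
    refine ⟨Finset.mem_univ j, ?_⟩
    rcases h j with h' | h'
    · rw [← h']; exact hj.2
    · exact absurd h' hj.2
  obtain ⟨j, hj⟩ : ∃ j, x j ≠ y j := by
    by_contra hc
    push_neg at hc
    exact hne (funext hc)
  have hxj : x j = 0 := (h j).resolve_left hj
  have hyj : y j ≠ 0 := by
    intro h'
    exact hj (by rw [hxj, h'])
  apply Finset.card_lt_card
  rw [Finset.ssubset_iff_of_subset hsub]
  refine ⟨j, ?_, ?_⟩
  · rw [Finset.mem_filter]; exact ⟨Finset.mem_univ j, hyj⟩
  · rw [Finset.mem_filter]; push_neg; intro _; exact hxj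

/-- For `n + 1 ≥ 3`: if `x < y` in `1ₙ^⊥ \ {0}` with `xₙ ∈ S¹` and
`0 ∈ x_j ⊞ x_k ⊞ xₙ` for some `j < k < n`, then `0 ∈ y_j ⊞ y_k ⊞ yₙ`.  Consequently
every chain in `{x ∈ 1ₙ^⊥ : xₙ ∈ S¹}` is contained in
`{x ∈ Φⁿ \ {0} : 0 ∈ x_j ⊞ x_k ⊞ xₙ}` for some `j < k < n`. -/
theorem chain_in_triple_set (n : ℕ) (hn : 2 ≤ n) :
    (∀ x y : Fin (n + 1) → ℂ,
      x ∈ perp (fun _ : Fin (n + 1) => (1 : ℂ)) →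
      y ∈ perp (fun _ : Fin (n + 1) => (1 : ℂ)) →
      x ≠ 0 → y ≠ 0 → phiLEn x y → x ≠ y → x (Fin.last n) ∈ unitCircle →
      ∀ j k : Fin (n + 1), j < k → k < Fin.last n →
        (0 : ℂ) ∈ haddList [x j, x k, x (Fin.last n)] →
        (0 : ℂ) ∈ haddList [y j, y k, y (Fin.last n)]) ∧
    ∀ C : Set (Fin (n + 1) → ℂ),
      C ⊆ {x ∈ perp (fun _ : Fin (n + 1) => (1 : ℂ)) | x (Fin.last n) ∈ unitCircle} →
      IsChain phiLEn C →
      ∃ j k : Fin (n + 1), j < k ∧ k < Fin.last n ∧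
        ∀ x ∈ C, (0 : ℂ) ∈ haddList [x j, x k, x (Fin.last n)] := by
  have habs_of_unit : ∀ u : ℂ, u ∈ unitCircle → ‖u‖ = 1 := by
    intro u hu
    simpa [unitCircle, Metric.mem_sphere, Complex.dist_eq, sub_zero] using hu
  have hperp : ∀ x : Fin (n+1) → ℂ, x ∈ perp (fun _ : Fin (n + 1) => (1 : ℂ)) →
      (∀ k, x k ∈ Phi) ∧ (0:ℂ) ∈ haddList (List.ofFn x) := by
    intro x hx
    obtain ⟨h1, h2⟩ := hx
    refine ⟨h1, ?_⟩
    simpa only [one_mul] using h2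
  constructor
  · intro x y hx hy _ _ hle hne hxlast j k hjk hklast htriple
    have hzX : ‖x (Fin.last n)‖ = 1 := habs_of_unit _ hxlast
    have hylast : y (Fin.last n) = x (Fin.last n) := by
      rcases hle (Fin.last n) with h | h
      · exact h.symm
      · exact absurd h (zero_ne_of_abs hzX)
    rw [hylast]
    exact mono_triple ((hperp y hy).1 j) ((hperp y hy).1 k) hzX (hle j) (hle k) htriple
  · intro C hC hchain
    have h0n : (0:ℕ) < n + 1 := by omega
    have h1n : (1:ℕ) < n + 1 := by omega
    by_cases hCne : C.Nonempty
    · set S := suppCard '' C with hS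
      have hSne : S.Nonempty := hCne.image _
      obtain ⟨x₀, hx₀C, hx₀m⟩ := Nat.sInf_mem hSne
      have hmin : ∀ y ∈ C, phiLEn x₀ y := by
        intro y hy
        by_cases hxy : x₀ = y
        · rw [hxy]; exact fun j => Or.inl rfl
        rcases hchain hx₀C hy hxy with h | h
        · exact h
        · exfalso
          have hlt : suppCard y < suppCard x₀ :=
            suppCard_lt_of_lt h (fun h' => hxy h'.symm)
          have hle' : sInf S ≤ suppCard y := Nat.sInf_le ⟨y, hy, rfl⟩
          omega
      obtain ⟨hx₀perp, hx₀unit⟩ := hC hx₀C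
      obtain ⟨hx₀Phi, hx₀sum⟩ := hperp x₀ hx₀perp
      have hzabs : ‖x₀ (Fin.last n)‖ = 1 := habs_of_unit _ hx₀unit
      obtain ⟨j, k, hjk, hklast, h₀⟩ := exists_triple hn x₀ hx₀Phi hzabs hx₀sum
      refine ⟨j, k, hjk, hklast, ?_⟩
      intro x hxC
      by_cases hxx : x = x₀
      · rw [hxx]; exact h₀
      · have hle := hmin x hxC
        have hxlast : x (Fin.last n) = x₀ (Fin.last n) := by
          rcases hle (Fin.last n) with h | h
          · exact h.symm
          · exact absurd h (zero_ne_of_abs hzabs)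
        rw [hxlast]
        exact mono_triple ((hperp x (hC hxC).1).1 j) ((hperp x (hC hxC).1).1 k) hzabs
          (hle j) (hle k) h₀
    · refine ⟨⟨0, h0n⟩, ⟨1, h1n⟩, Fin.mk_lt_mk.2 (by omega), ?_, ?_⟩
      · rw [Fin.lt_iff_val_lt_val]
        show (1:ℕ) < n
        omega
      · intro x hx
        exact absurd ⟨x, hx⟩ hCne
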